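/- arXiv:1812.01581 — 9 statements merged into one kernel-verified Lean document; each statement's English description precedes it below -/
import Mathlib

section
/- If k is even and positive, every 3×k matrix with entries in ℤ/kℤ contains a fair 2×2 submatrix: there exist rows i ≠ j and columns p ≠ q with x(i,p) + x(j,q) = x(i,q) + x(j,p). -/
theorem fair_submatrix_three_rows (k : ℕ) (hk : 0 < k) (hke : Even k)
    (x : Fin 3 → Fin k → ZMod k) :
    ∃ i j : Fin 3, ∃ p q : Fin k, i ≠ j ∧ p ≠ q ∧
      x i p + x j q = x i q + x j p := by
  haveI : NeZero k := ⟨hk.ne'⟩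
  by_contra hcon
  push_neg at hcon
  -- For each pair of distinct rows, the column-difference map is injective.
  have hinj : ∀ i j : Fin 3, i ≠ j →
      Function.Injective (fun c : Fin k => x i c - x j c) := by
    intro i j hij p q hpq
    by_contra hne
    exact hcon i j p q hij hne (by linear_combination hpq)
  have hsum : ∀ i j : Fin 3, i ≠ j →
      (∑ c : Fin k, (x i c - x j c)) = ∑ y : ZMod k, y := by
    intro i j hij
    have hb : Function.Bijective (fun c : Fin k => x i c - x j c) := by
      rw [Fintype.bijective_iff_injective_and_card]
      exact ⟨hinj i j hij, by simp [ZMod.card]⟩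
    exact Fintype.sum_bijective _ hb _ _ (fun c => rfl)
  set S : ZMod k := ∑ y : ZMod k, y with hS
  have h01 := hsum 0 1 (by decide)
  have h02 := hsum 0 2 (by decide)
  have h12 := hsum 1 2 (by decide)
  have hSzero : S = 0 := by
    have key : (∑ c : Fin k, (x 0 c - x 1 c))
        = (∑ c : Fin k, (x 0 c - x 2 c)) - (∑ c : Fin k, (x 1 c - x 2 c)) := by
      rw [← Finset.sum_sub_distrib]
      apply Finset.sum_congr rfl
      intro c _
      ring
    rw [h01, h02, h12] at key
    simpa using key
  -- compute S ≠ 0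
  obtain ⟨m, hm⟩ := hke
  have hmpos : 0 < m := by omega
  have hcast : Function.Bijective (fun i : Fin k => ((i : ℕ) : ZMod k)) := by
    rw [Fintype.bijective_iff_injective_and_card]
    constructor
    · intro a b hab
      have : (a : ℕ) % k = (b : ℕ) % k := by
        have := congrArg ZMod.val hab
        simpa [ZMod.val_natCast] using this
      rw [Nat.mod_eq_of_lt a.isLt, Nat.mod_eq_of_lt b.isLt] at this
      exact Fin.ext this
    · simp [ZMod.card]
  have hSval : S = (m : ZMod k) := by
    have h1 : S = ∑ i : Fin k, ((i : ℕ) : ZMod k) :=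
      (Fintype.sum_bijective _ hcast _ _ (fun i => rfl)).symm
    have h0 : (∑ i : Fin k, ((i : ℕ) : ZMod k)) = ((∑ i : Fin k, (i : ℕ) : ℕ) : ZMod k) := by
      push_cast
      rfl
    have h2 : ∑ i : Fin k, (i : ℕ) = m * (k - 1) := by
      have h3 : (∑ i ∈ Finset.range k, i) * 2 = k * (k - 1) :=
        Finset.sum_range_id_mul_two k
      have h4 : k * (k - 1) = 2 * (m * (k - 1)) := by
        rw [hm]; ring
      rw [Fin.sum_univ_eq_sum_range (fun i => i)]
      set s := ∑ i ∈ Finset.range k, i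
      set t := m * (k - 1)
      omega
    have h5 : m * (k - 1) = m * k - m := by
      rw [Nat.mul_sub, Nat.mul_one]
    have h6 : ((m * k - m : ℕ) : ZMod k) = (m : ZMod k) * (k : ZMod k) - m := by
      have hle : m ≤ m * k := Nat.le_mul_of_pos_right m hk
      push_cast [Nat.cast_sub hle]
      ring
    have h7 : (m : ZMod k) + m = 0 := by
      rw [← Nat.cast_add, ← hm, ZMod.natCast_self]
    rw [h1, h0, h2, h5, h6, ZMod.natCast_self]
    linear_combination -h7
  have hmne : (m : ZMod k) ≠ 0 := by
    rw [Ne, ZMod.natCast_eq_zero_iff]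
    intro hdvd
    have := Nat.le_of_dvd hmpos hdvd
    omega
  exact hmne (hSval ▸ hSzero)
end

section
/- Define the graph G_k whose vertices are all functions f : ℤ/kℤ → ℤ/kℤ, with f and g adjacent iff f ≠ g and f − g is a bijection. If k is even and positive, then G_k is triangle-free. -/
open Finset

lemma sum_zmod_univ (k : ℕ) [NeZero k] : ∑ x : ZMod k, x = ((k * (k-1) / 2 : ℕ) : ZMod k) := by
  rw [← Finset.sum_range_id, Nat.cast_sum]
  symm
  apply Finset.sum_bij (fun i _ => ((i : ℕ) : ZMod k))
  · intro a ha; exact mem_univ _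
  · intro a ha b hb h
    have := congrArg ZMod.val h
    rwa [ZMod.val_natCast_of_lt (mem_range.mp ha), ZMod.val_natCast_of_lt (mem_range.mp hb)] at this
  · intro b _
    exact ⟨b.val, mem_range.mpr (ZMod.val_lt b), ZMod.natCast_rightInverse b⟩
  · intro a ha; rfl

theorem G_k_triangle_free (k : ℕ) (hk : 0 < k) (hke : Even k) :
    (SimpleGraph.fromRel
      (fun f g : ZMod k → ZMod k =>
        Function.Bijective (fun j => f j - g j))).CliqueFree 3 := by
  haveI : NeZero k := ⟨hk.ne'⟩
  obtain ⟨m, rfl⟩ := hke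
  have hm : 0 < m := by omega
  set S := ∑ x : ZMod (m + m), x with hS
  have hmm : ((m : ZMod (m+m)) + m) = 0 := by
    rw [← Nat.cast_add, ZMod.natCast_self]
  have hSval : S = (m : ZMod (m + m)) := by
    rw [hS, sum_zmod_univ]
    have h1 : (m + m) * (m + m - 1) / 2 = m * (m + m - 1) := by
      have : (m+m) * (m+m-1) = 2 * (m * (m+m-1)) := by ring
      omega
    rw [h1]
    push_cast [Nat.cast_sub (by omega : 1 ≤ m + m)]
    linear_combination ((m : ZMod (m+m)) - 1) * hmm
  have hSne : S ≠ 0 := by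
    rw [hSval]
    intro h0
    rw [ZMod.natCast_eq_zero_iff] at h0
    exact absurd (Nat.le_of_dvd hm h0) (by omega)
  have hSS : S + S = 0 := by rw [hSval]; exact hmm
  have key : ∀ f g : ZMod (m+m) → ZMod (m+m),
      (SimpleGraph.fromRel
        (fun f g : ZMod (m+m) → ZMod (m+m) =>
          Function.Bijective (fun j => f j - g j))).Adj f g →
      ∑ j : ZMod (m+m), (f j - g j) = S := by
    intro f g hadj
    rw [SimpleGraph.fromRel_adj] at hadj
    rcases hadj.2 with hb | hb
    · exact Fintype.sum_bijective _ hb _ _ (fun _ => rfl)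
    · have hgf : ∑ j : ZMod (m+m), (g j - f j) = S :=
        Fintype.sum_bijective _ hb _ _ (fun _ => rfl)
      have h2 : ∑ j : ZMod (m+m), (f j - g j) = -S := by
        rw [← hgf, ← Finset.sum_neg_distrib]
        apply Finset.sum_congr rfl
        intros; ring
      rw [h2, neg_eq_of_add_eq_zero_left hSS]
  intro t ht
  obtain ⟨f, g, h, hfg, hfh, hgh, rfl⟩ := Finset.card_eq_three.mp ht.card_eq
  have A := key f g (ht.isClique (by simp) (by simp) hfg)
  have B := key g h (ht.isClique (by simp) (by simp) hgh)
  have C := key f h (ht.isClique (by simp) (by simp) hfh)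
  have e : ∑ j : ZMod (m+m), (f j - h j)
      = ∑ j : ZMod (m+m), ((f j - g j) + (g j - h j)) :=
    Finset.sum_congr rfl (fun _ _ => by ring)
  rw [Finset.sum_add_distrib, A, B, C] at e
  rw [hSS] at e
  exact hSne e
end

section
/- If k is prime, then the clique number of G_k is exactly k: the functions j ↦ i·j for i ∈ ℤ/kℤ form a clique of size k, and no clique has size larger than k. -/
theorem clique_number_prime (k : ℕ) (hk : k.Prime) :
    (∃ s : Finset (ZMod k → ZMod k),
        (SimpleGraph.fromRel
          (fun f g : ZMod k → ZMod k =>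
            Function.Bijective (fun j => f j - g j))).IsNClique k s) ∧
      (∀ s : Finset (ZMod k → ZMod k),
        (SimpleGraph.fromRel
          (fun f g : ZMod k → ZMod k =>
            Function.Bijective (fun j => f j - g j))).IsClique ↑s →
        s.card ≤ k) := by
  haveI : Fact k.Prime := ⟨hk⟩
  constructor
  · refine ⟨Finset.univ.image (fun i : ZMod k => fun j => i * j), ?_, ?_⟩
    · intro f hf g hg hfg
      simp only [Finset.coe_image, Set.mem_image, Finset.mem_coe] at hf hg
      obtain ⟨i, -, rfl⟩ := hf
      obtain ⟨i', -, rfl⟩ := hg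
      refine ⟨hfg, Or.inl ?_⟩
      have hii : i - i' ≠ 0 := by
        intro h
        exact hfg (by rw [sub_eq_zero.mp h])
      have heq : (fun j : ZMod k => i * j - i' * j) = fun j => (i - i') * j := by
        funext j; ring
      show Function.Bijective (fun j : ZMod k => i * j - i' * j)
      rw [heq]
      refine Finite.injective_iff_bijective.mp ?_
      intro a b hab
      exact mul_left_cancel₀ hii hab
    · rw [Finset.card_image_of_injective _ (fun a b hab => by simpa using congrFun hab 1)]
      simp [ZMod.card]
  · intro s hs
    have hinj : Set.InjOn (fun f : ZMod k → ZMod k => f 0 - f 1) ↑s := by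
      intro f hf g hg hfg
      by_contra hne
      obtain ⟨-, h | h⟩ := hs hf hg hne
      · exact h.injective.ne (zero_ne_one (α := ZMod k))
          (by dsimp only at hfg ⊢; linear_combination hfg)
      · exact h.injective.ne (zero_ne_one (α := ZMod k))
          (by dsimp only at hfg ⊢; linear_combination -hfg)
    calc s.card = (s.image (fun f => f 0 - f 1)).card :=
          (Finset.card_image_of_injOn hinj).symm
      _ ≤ Fintype.card (ZMod k) := Finset.card_le_univ _
      _ = k := ZMod.card k
end

section
/- If k is even and positive, the clique number of the graph G_k equals p(k) = 2: there is a clique of size 2 but no clique of size 3. -/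
lemma sum_zmod_ne_zero (n m : ℕ) (hm0 : 0 < m) (hm : n + 1 = m + m) :
    (∑ x : ZMod (n+1), x) ≠ 0 := by
  have hcast : (∑ x : ZMod (n+1), x) = ((∑ x : ZMod (n+1), x.val : ℕ) : ZMod (n+1)) := by
    push_cast
    simp [ZMod.natCast_val, ZMod.cast_id]
  have hvalsum : (∑ x : ZMod (n+1), x.val) = ∑ i ∈ Finset.range (n+1), i := by
    exact Finset.sum_bij (fun x _ => x.val) (fun x _ => Finset.mem_range.2 x.val_lt)
      (fun a _ b _ h => ZMod.val_injective _ h)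
      (fun i hi => ⟨(i : ZMod (n+1)), Finset.mem_univ _,
        ZMod.val_natCast_of_lt (Finset.mem_range.1 hi)⟩)
      (fun _ _ => rfl)
  rw [hcast, hvalsum, Finset.sum_range_id]
  have h2 : (n+1) * (n+1-1) / 2 = m * n := by
    have h3 : (n+1) * (n+1-1) = (m*n) * 2 := by
      rw [Nat.add_sub_cancel, hm]; ring
    rw [h3, Nat.mul_div_cancel _ two_pos]
  rw [h2]
  intro h
  have hd : (n+1) ∣ m * n := (ZMod.natCast_eq_zero_iff _ _).1 h
  have hdvd : (n+1) ∣ m := by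
    have h4 := Nat.dvd_sub (dvd_mul_left (n+1) m) hd
    have h5 : m * (n+1) - m * n = m := by
      have : m*(n+1) = m*n + m := by ring
      omega
    rwa [h5] at h4
  have := Nat.le_of_dvd hm0 hdvd
  omega

theorem clique_number_even (k : ℕ) (hk : 0 < k) (hke : Even k) :
    (∃ s : Finset (ZMod k → ZMod k),
        (SimpleGraph.fromRel
          (fun f g : ZMod k → ZMod k =>
            Function.Bijective (fun j => f j - g j))).IsNClique 2 s) ∧
      (SimpleGraph.fromRel
        (fun f g : ZMod k → ZMod k =>
          Function.Bijective (fun j => f j - g j))).CliqueFree 3 := by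
  obtain ⟨m, hm⟩ := hke
  have hm0 : 0 < m := by omega
  obtain ⟨n, rfl⟩ : ∃ n, k = n + 1 := ⟨k - 1, by omega⟩
  set G := SimpleGraph.fromRel
      (fun f g : ZMod (n+1) → ZMod (n+1) =>
        Function.Bijective (fun j => f j - g j)) with hG
  have hk2 : 2 ≤ n + 1 := by omega
  haveI : Fact (1 < n+1) := ⟨by omega⟩
  have hne : (fun _ : ZMod (n+1) => (0 : ZMod (n+1))) ≠ (fun j : ZMod (n+1) => j) := by
    intro h
    exact one_ne_zero (congrFun h 1).symm
  have hadj : G.Adj (fun _ => (0 : ZMod (n+1))) (fun j => j) := by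
    rw [hG, SimpleGraph.fromRel_adj]
    refine ⟨hne, Or.inr ?_⟩
    have : (fun j : ZMod (n+1) => j - 0) = id := by funext j; simp
    rw [this]
    exact Function.bijective_id
  constructor
  · refine ⟨{(fun _ => (0 : ZMod (n+1))), (fun j => j)}, ?_, ?_⟩
    · rw [Finset.coe_insert, Finset.coe_singleton]
      exact SimpleGraph.isClique_pair.2 (fun _ => hadj)
    · rw [Finset.card_pair hne]
  · -- clique free 3
    set S : ZMod (n+1) := ∑ x : ZMod (n+1), x with hS
    have hSne : S ≠ 0 := sum_zmod_ne_zero n m hm0 hm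
    have hSneg : -S = S := by
      have h : S = -S := by
        calc S = ∑ x : ZMod (n+1), -x :=
              Fintype.sum_equiv (Equiv.neg _) _ _ (fun x => (neg_neg x).symm)
          _ = -S := by rw [Finset.sum_neg_distrib]
      exact h.symm
    have key : ∀ f g : ZMod (n+1) → ZMod (n+1), G.Adj f g →
        (∑ j, (f j - g j)) = S := by
      intro f g hfg
      rw [hG, SimpleGraph.fromRel_adj] at hfg
      rcases hfg.2 with hb | hb
      · exact hb.sum_comp id
      · have h1 : (∑ j, (g j - f j)) = S := hb.sum_comp id
        have h2 : (∑ j, (f j - g j)) = -∑ j, (g j - f j) := by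
          rw [← Finset.sum_neg_distrib]
          congr 1; funext j; ring
        rw [h2, h1, hSneg]
    intro t ht
    obtain ⟨a, b, c, hab, hac, hbc, htv⟩ := Finset.card_eq_three.1 ht.2
    have ha : a ∈ t := by rw [htv]; simp
    have hb : b ∈ t := by rw [htv]; simp
    have hc : c ∈ t := by rw [htv]; simp
    have h1 := key a b (ht.1 ha hb hab)
    have h2 := key b c (ht.1 hb hc hbc)
    have h3 := key a c (ht.1 ha hc hac)
    have hsum : (∑ j, (a j - c j)) = (∑ j, (a j - b j)) + ∑ j, (b j - c j) := by
      rw [← Finset.sum_add_distrib]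
      congr 1; funext j; ring
    rw [h1, h2, h3] at hsum
    exact hSne (by linear_combination -hsum)
end

section
/- Let A, B be disjoint finite sets with |A| = n, |B| = m, and let 𝒬 be a family of 4-element subsets of A ∪ B each having exactly 2 elements in A and 2 in B. Suppose every (k+3)-subset S with |S ∩ A| = 2 and |S ∩ B| = k+1 contains a member of 𝒬. Then |𝒬| ≥ C(n,2) · T(m, k+1, 2), where T(m, k+1, 2) is the minimum number of edges of a graph on m vertices with independence number less than k+1. -/
/-- `turanCov m r` : the minimum number of edges in a graph on `m` vertices such that
every `r`-subset of vertices contains an edge. -/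
noncomputable def turanCov (m r : ℕ) : ℕ :=
  sInf {t : ℕ | ∃ E : Finset (Finset (Fin m)), E.card = t ∧
    (∀ e ∈ E, e.card = 2) ∧
    ∀ S : Finset (Fin m), S.card = r → ∃ e ∈ E, e ⊆ S}

theorem lower_bound_quadruples {V : Type*} [DecidableEq V]
    (k n m : ℕ) (A B : Finset V) (hAB : Disjoint A B)
    (hA : A.card = n) (hB : B.card = m)
    (𝒬 : Finset (Finset V))
    (h𝒬 : ∀ Q ∈ 𝒬, Q.card = 4 ∧ (Q ∩ A).card = 2 ∧ (Q ∩ B).card = 2)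
    (hcov : ∀ S : Finset V, S ⊆ A ∪ B → (S ∩ A).card = 2 →
      (S ∩ B).card = k + 1 → ∃ Q ∈ 𝒬, Q ⊆ S) :
    n.choose 2 * turanCov m (k + 1) ≤ 𝒬.card := by
  classical
  -- bijection B ≃ Fin m
  let e : {x // x ∈ B} ≃ Fin m := B.equivFinOfCardEq hB
  -- map a subset of B to Fin m
  let g : Finset V → Finset (Fin m) := fun T => (T.subtype (· ∈ B)).map e.toEmbedding
  have hgcard : ∀ T : Finset V, T ⊆ B → (g T).card = T.card := by
    intro T hT
    simp only [g, Finset.card_map, Finset.card_subtype]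
    rw [Finset.filter_true_of_mem (fun x hx => hT hx)]
  -- key: each fiber over a pair P ⊆ A has card ≥ turanCov
  have key : ∀ P ∈ A.powersetCard 2,
      turanCov m (k + 1) ≤ (𝒬.filter (fun Q => Q ∩ A = P)).card := by
    intro P hP
    rw [Finset.mem_powersetCard] at hP
    obtain ⟨hPA, hPcard⟩ := hP
    set 𝒬P := 𝒬.filter (fun Q => Q ∩ A = P) with h𝒬P
    set E : Finset (Finset (Fin m)) := 𝒬P.image (fun Q => g (Q ∩ B)) with hE
    have hmem : E.card ∈ {t : ℕ | ∃ E : Finset (Finset (Fin m)), E.card = t ∧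
        (∀ e ∈ E, e.card = 2) ∧
        ∀ S : Finset (Fin m), S.card = k + 1 → ∃ e ∈ E, e ⊆ S} := by
      refine ⟨E, rfl, ?_, ?_⟩
      · intro ed hed
        rw [hE, Finset.mem_image] at hed
        obtain ⟨Q, hQ, rfl⟩ := hed
        rw [h𝒬P, Finset.mem_filter] at hQ
        rw [hgcard _ Finset.inter_subset_right]
        exact (h𝒬 Q hQ.1).2.2
      · intro S hS
        -- transfer S to a subset of B
        set T : Finset V := (S.map e.symm.toEmbedding).map
          (Function.Embedding.subtype (· ∈ B)) with hT
        have hTB : T ⊆ B := by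
          intro x hx
          rw [hT, Finset.mem_map] at hx
          obtain ⟨y, _, rfl⟩ := hx
          exact y.2
        have hTcard : T.card = k + 1 := by
          rw [hT, Finset.card_map, Finset.card_map, hS]
        have hPT_A : (P ∪ T) ∩ A = P := by
          rw [Finset.union_inter_distrib_right,
            Finset.inter_eq_left.mpr hPA,
            Finset.disjoint_iff_inter_eq_empty.mp (Finset.disjoint_of_subset_left hTB hAB.symm),
            Finset.union_empty]
        have hPT_B : (P ∪ T) ∩ B = T := by
          rw [Finset.union_inter_distrib_right,
            Finset.disjoint_iff_inter_eq_empty.mp (Finset.disjoint_of_subset_left hPA hAB),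
            Finset.inter_eq_left.mpr hTB, Finset.empty_union]
        obtain ⟨Q, hQ𝒬, hQsub⟩ := hcov (P ∪ T)
          (Finset.union_subset (hPA.trans Finset.subset_union_left)
            (hTB.trans Finset.subset_union_right))
          (by rw [hPT_A, hPcard]) (by rw [hPT_B, hTcard])
        have hQA : Q ∩ A = P := by
          apply Finset.eq_of_subset_of_card_le
          · intro x hx
            rw [← hPT_A]
            exact Finset.inter_subset_inter_right hQsub hx
          · rw [hPcard, (h𝒬 Q hQ𝒬).2.1]
        have hQP : Q ∈ 𝒬P := by
          rw [h𝒬P, Finset.mem_filter]; exact ⟨hQ𝒬, hQA⟩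
        refine ⟨g (Q ∩ B), Finset.mem_image_of_mem _ hQP, ?_⟩
        intro x hx
        simp only [g, Finset.mem_map, Finset.mem_subtype] at hx
        obtain ⟨a, ha, rfl⟩ := hx
        have haT : (a : V) ∈ T := by
          rw [← hPT_B]
          exact Finset.inter_subset_inter_right hQsub ha
        rw [hT, Finset.mem_map] at haT
        obtain ⟨b, hb, hba⟩ := haT
        rw [Finset.mem_map] at hb
        obtain ⟨s, hs, hsb⟩ := hb
        have hba' : b = a := Subtype.ext hba
        have hes : e a = s := by
          rw [← hba', ← hsb]; simp
        simpa [hes] using hs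
        
    calc turanCov m (k + 1) ≤ E.card := Nat.sInf_le hmem
      _ ≤ 𝒬P.card := Finset.card_image_le
  -- fiber decomposition
  have hdecomp : 𝒬.card = ∑ P ∈ A.powersetCard 2,
      (𝒬.filter (fun Q => Q ∩ A = P)).card := by
    apply Finset.card_eq_sum_card_fiberwise
    intro Q hQ
    rw [Finset.mem_coe, Finset.mem_powersetCard]
    exact ⟨Finset.inter_subset_right, (h𝒬 Q hQ).2.1⟩
  rw [hdecomp]
  calc n.choose 2 * turanCov m (k + 1)
      = ∑ _P ∈ A.powersetCard 2, turanCov m (k + 1) := by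
        rw [Finset.sum_const, Finset.card_powersetCard, hA, smul_eq_mul]
    _ ≤ ∑ P ∈ A.powersetCard 2, (𝒬.filter (fun Q => Q ∩ A = P)).card :=
        Finset.sum_le_sum key
end

section
/- Let X be an n×m matrix over ℤ/kℤ with m ≥ k+1, and let 𝒬 be the family of quadruples {a_i, a_j, b_p, b_q} (i<j, p<q) such that rows i,j and columns p,q of X form a fair 2×2 submatrix. Then for every pair of rows i<j and every (k+1)-subset C of columns, there exist p, q ∈ C with p ≠ q such that {a_i, a_j, b_p, b_q} ∈ 𝒬. -/
theorem fair_family_covers (k n m : ℕ) (hk : 1 ≤ k) (hm : k + 1 ≤ m)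
    (X : Fin n → Fin m → ZMod k) (i j : Fin n) (hij : i < j)
    (C : Finset (Fin m)) (hC : C.card = k + 1) :
    ∃ p ∈ C, ∃ q ∈ C, p ≠ q ∧ X i p + X j q = X i q + X j p := by
  haveI : NeZero k := ⟨by omega⟩
  obtain ⟨p, hp, q, hq, hpq, h⟩ :=
    Finset.exists_ne_map_eq_of_card_lt_of_maps_to
      (s := C) (t := (Finset.univ : Finset (ZMod k)))
      (by simp [hC, ZMod.card]) (f := fun c => X i c - X j c)
      (fun c _ => Finset.mem_univ _)
  exact ⟨p, hp, q, hq, hpq, by linear_combination h⟩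
end

section
/- Let k be even and positive, X an n×m matrix over ℤ/kℤ. Then for every 3-subset R of rows and every k-subset C of columns, there exist rows i ≠ j in R and columns p ≠ q in C forming a fair 2×2 submatrix of X. -/
lemma sum_univ_zmod_ne_zero (k : ℕ) [NeZero k] (hke : Even k) :
    ∑ x : ZMod k, x ≠ 0 := by
  have hk : 0 < k := Nat.pos_of_ne_zero (NeZero.ne k)
  obtain ⟨t, rfl⟩ := hke
  have ht : 0 < t := by omega
  have h1 : ∑ x : ZMod (t + t), x = ((∑ i ∈ Finset.range (t + t), i : ℕ) : ZMod (t + t)) := by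
    rw [Nat.cast_sum]
    refine Finset.sum_bij' (fun (x : ZMod (t+t)) _ => ZMod.val x)
      (fun (i : ℕ) _ => (i : ZMod (t + t))) ?_ ?_ ?_ ?_ ?_
    · intro a _; exact Finset.mem_range.mpr (ZMod.val_lt a)
    · intro a _; exact Finset.mem_univ _
    · intro a _; simp [ZMod.natCast_val, ZMod.cast_id]
    · intro a ha; exact ZMod.val_cast_of_lt (Finset.mem_range.mp ha)
    · intro a _; simp [ZMod.natCast_val, ZMod.cast_id]
  rw [h1, Finset.sum_range_id, Ne, ZMod.natCast_eq_zero_iff]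
  intro hdvd
  have he : (t + t) * (t + t - 1) / 2 = t * (t + t - 1) := by
    have : (t + t) * (t + t - 1) = (t * (t + t - 1)) * 2 := by ring
    rw [this, Nat.mul_div_cancel _ two_pos]
  rw [he] at hdvd
  have h2 : (t + t) ∣ t * (t + t) := dvd_mul_left _ _
  have h4 : t * (t + t - 1) + t = t * (t + t) := by
    rw [← Nat.mul_succ]; congr 1; omega
  have h5 := Nat.dvd_sub h2 hdvd
  have h6 : t * (t + t) - t * (t + t - 1) = t := by omega
  rw [h6] at h5
  have := Nat.le_of_dvd ht h5
  omega

theorem fair_family_covers_three (k n m : ℕ) (hk : 0 < k) (hke : Even k)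
    (X : Fin n → Fin m → ZMod k)
    (R : Finset (Fin n)) (hR : R.card = 3)
    (C : Finset (Fin m)) (hC : C.card = k) :
    ∃ i ∈ R, ∃ j ∈ R, i ≠ j ∧ ∃ p ∈ C, ∃ q ∈ C, p ≠ q ∧
      X i p + X j q = X i q + X j p := by
  haveI : NeZero k := ⟨hk.ne'⟩
  by_contra hcon
  push_neg at hcon
  have key : ∀ i ∈ R, ∀ j ∈ R, i ≠ j →
      ∑ p ∈ C, (X i p - X j p) = ∑ x : ZMod k, x := by
    intro i hi j hj hij
    have hinj : Set.InjOn (fun p => X i p - X j p) C := by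
      intro p hp q hq hpq
      by_contra hne
      exact hcon i hi j hj hij p hp q hq hne (by linear_combination hpq)
    have himg : C.image (fun p => X i p - X j p) = Finset.univ := by
      apply Finset.eq_univ_of_card
      rw [Finset.card_image_of_injOn hinj, hC, ZMod.card]
    calc ∑ p ∈ C, (X i p - X j p)
        = ∑ x ∈ C.image (fun p => X i p - X j p), x :=
          (Finset.sum_image (f := fun x => x) (g := fun p => X i p - X j p) (fun p hp q hq => hinj hp hq)).symm
      _ = ∑ x : ZMod k, x := by rw [himg]
  obtain ⟨a, b, c, hab, hac, hbc, hRabc⟩ := Finset.card_eq_three.mp hR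
  have ha : a ∈ R := by rw [hRabc]; simp
  have hb : b ∈ R := by rw [hRabc]; simp
  have hc : c ∈ R := by rw [hRabc]; simp
  have h1 := key a ha b hb hab
  have h2 := key b hb c hc hbc
  have h3 := key a ha c hc hac
  have hsum : ∑ p ∈ C, ((X a p - X b p) + (X b p - X c p)) = ∑ p ∈ C, (X a p - X c p) :=
    Finset.sum_congr rfl fun p _ => by ring
  rw [Finset.sum_add_distrib, h1, h2, h3] at hsum
  exact sum_univ_zmod_ne_zero k hke (by linear_combination hsum)
end

section
/- For k ≥ 1, Q(n, m, 𝒫_{k2}) ≤ (1/k)·C(n,2)·C(m,2), where Q(n, m, 𝒫_{k2}) is the minimum size of a family 𝒬 of quadruples with 2 elements from an n-set A and 2 from an m-set B such that every subset with 2 elements from A and k+1 from B, and every subset with k+1 elements from A and 2 from B, contains a member of 𝒬. -/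
open Finset Sum

namespace QK2Aux

variable {k n m : ℕ}

/-- The "fairness defect" of the 2×2 submatrix of `M` given by rows `a1,a2`, columns `b1,b2`. -/
def Dv (M : Fin n → Fin m → ZMod k) (a1 a2 : Fin n) (b1 b2 : Fin m) : ZMod k :=
  M a1 b1 - M a1 b2 - M a2 b1 + M a2 b2

def pairsLT (n : ℕ) : Finset (Fin n × Fin n) :=
  (univ : Finset (Fin n × Fin n)).filter fun p => p.1 < p.2

def Tset (n m : ℕ) : Finset ((Fin n × Fin n) × (Fin m × Fin m)) :=
  pairsLT n ×ˢ pairsLT m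

def quad (p : (Fin n × Fin n) × (Fin m × Fin m)) : Finset (Fin n ⊕ Fin m) :=
  {inl p.1.1, inl p.1.2, inr p.2.1, inr p.2.2}

def famQ (k : ℕ) (M : Fin n → Fin m → ZMod k) : Finset (Finset (Fin n ⊕ Fin m)) :=
  ((Tset n m).filter fun p => Dv M p.1.1 p.1.2 p.2.1 p.2.2 = 0).image quad

lemma card_pairsLT (n : ℕ) : (pairsLT n).card = n.choose 2 := by
  have hsymm : (pairsLT n).card
      = ((univ : Finset (Fin n × Fin n)).filter fun p => p.2 < p.1).card := by
    apply Finset.card_bij' (fun p _ => p.swap) (fun p _ => p.swap) <;>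
      simp [pairsLT, Finset.mem_filter]
  have hoff : ((univ : Finset (Fin n)).offDiag)
      = (univ : Finset (Fin n × Fin n)).filter fun p => p.1 ≠ p.2 := by
    ext p; simp [Finset.mem_offDiag]
  have hsplit : (pairsLT n).card
      + ((univ : Finset (Fin n × Fin n)).filter fun p => p.2 < p.1).card
      = n * n - n := by
    have := Finset.card_filter_add_card_filter_not
      (s := (univ : Finset (Fin n × Fin n)).filter fun p => p.1 ≠ p.2)
      (p := fun p => p.1 < p.2)
    rw [Finset.filter_filter, Finset.filter_filter] at this
    have h1 : ((univ : Finset (Fin n × Fin n)).filter fun p => p.1 ≠ p.2 ∧ p.1 < p.2)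
        = pairsLT n := by
      ext p; simp only [pairsLT, Finset.mem_filter]; constructor
      · rintro ⟨_, _, h⟩; exact ⟨by simp, h⟩
      · rintro ⟨_, h⟩; exact ⟨by simp, ne_of_lt h, h⟩
    have h2 : ((univ : Finset (Fin n × Fin n)).filter fun p => p.1 ≠ p.2 ∧ ¬ p.1 < p.2)
        = (univ : Finset (Fin n × Fin n)).filter fun p => p.2 < p.1 := by
      ext p; simp only [Finset.mem_filter]; constructor
      · rintro ⟨_, hne, hnlt⟩; exact ⟨by simp, lt_of_le_of_ne (le_of_not_gt hnlt) (Ne.symm hne)⟩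
      · rintro ⟨_, h⟩; exact ⟨by simp, (ne_of_lt h).symm, not_lt_of_gt h⟩
    rw [h1, h2, ← hoff, Finset.offDiag_card] at this
    simpa using this
  have hmul : n * n - n = n * (n - 1) := by
    cases n with
    | zero => simp
    | succ j => simp [Nat.succ_sub_one]; ring_nf; omega
  rw [← hsymm] at hsplit
  have := Nat.choose_two_right n
  omega

lemma card_Tset (n m : ℕ) : (Tset n m).card = n.choose 2 * m.choose 2 := by
  rw [Tset, Finset.card_product, card_pairsLT, card_pairsLT]

variable [NeZero k]

lemma fiber_card (a1 a2 : Fin n) (b1 b2 : Fin m) (ha : a1 ≠ a2) (hb : b1 ≠ b2) (c : ZMod k) :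
    ((univ : Finset (Fin n → Fin m → ZMod k)).filter fun M => Dv M a1 a2 b1 b2 = c).card
      = ((univ : Finset (Fin n → Fin m → ZMod k)).filter fun M => Dv M a1 a2 b1 b2 = 0).card := by
  apply Finset.card_bij'
    (i := fun M _ => fun a b => if a = a1 ∧ b = b1 then M a b - c else M a b)
    (j := fun M _ => fun a b => if a = a1 ∧ b = b1 then M a b + c else M a b)
  · intro M hM
    simp only [Finset.mem_filter, Finset.mem_univ, true_and] at hM ⊢
    simp only [Dv] at hM ⊢
    simp only [Ne.symm ha, Ne.symm hb, and_self, and_false, false_and, if_true, if_false]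
    linear_combination hM
  · intro M hM
    simp only [Finset.mem_filter, Finset.mem_univ, true_and] at hM ⊢
    simp only [Dv] at hM ⊢
    simp only [Ne.symm ha, Ne.symm hb, and_self, and_false, false_and, if_true, if_false]
    linear_combination hM
  · intro M _; funext a b; by_cases h : a = a1 ∧ b = b1 <;> simp [h]
  · intro M _; funext a b; by_cases h : a = a1 ∧ b = b1 <;> simp [h]

lemma fiber_total (a1 a2 : Fin n) (b1 b2 : Fin m) (ha : a1 ≠ a2) (hb : b1 ≠ b2) :
    ((univ : Finset (Fin n → Fin m → ZMod k)).filter fun M => Dv M a1 a2 b1 b2 = 0).card * k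
      = Fintype.card (Fin n → Fin m → ZMod k) := by
  have := Finset.card_eq_sum_card_fiberwise
    (s := (univ : Finset (Fin n → Fin m → ZMod k))) (t := (univ : Finset (ZMod k)))
    (f := fun M => Dv M a1 a2 b1 b2) (fun _ _ => mem_univ _)
  rw [← Finset.card_univ, this]
  rw [Finset.sum_congr rfl (fun c _ => fiber_card a1 a2 b1 b2 ha hb c)]
  simp [Finset.sum_const, Finset.card_univ, ZMod.card, mul_comm]

/-- There is a matrix whose number of fair 2×2 submatrices is at most average. -/
lemma exists_good_matrix :
    ∃ M : Fin n → Fin m → ZMod k,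
      (((Tset n m).filter fun p => Dv M p.1.1 p.1.2 p.2.1 p.2.2 = 0).card) * k
        ≤ n.choose 2 * m.choose 2 := by
  set F := Fin n → Fin m → ZMod k
  have hsum : (∑ M : F, (((Tset n m).filter fun p => Dv M p.1.1 p.1.2 p.2.1 p.2.2 = 0).card) * k)
      = (Tset n m).card * Fintype.card F := by
    have h1 : ∀ M : F, (((Tset n m).filter fun p => Dv M p.1.1 p.1.2 p.2.1 p.2.2 = 0).card) * k
        = ∑ p ∈ Tset n m, (if Dv M p.1.1 p.1.2 p.2.1 p.2.2 = 0 then k else 0) := by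
      intro M
      rw [← Finset.sum_filter, Finset.sum_const, smul_eq_mul]
    rw [Finset.sum_congr rfl fun M _ => h1 M, Finset.sum_comm]
    have h2 : ∀ p ∈ Tset n m,
        (∑ M : F, if Dv M p.1.1 p.1.2 p.2.1 p.2.2 = 0 then k else 0) = Fintype.card F := by
      intro p hp
      rw [Tset, Finset.mem_product] at hp
      have ha : p.1.1 ≠ p.1.2 := ne_of_lt (by simpa [pairsLT] using hp.1)
      have hb : p.2.1 ≠ p.2.2 := ne_of_lt (by simpa [pairsLT] using hp.2)
      rw [← Finset.sum_filter, Finset.sum_const, smul_eq_mul]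
      exact fiber_total p.1.1 p.1.2 p.2.1 p.2.2 ha hb
    rw [Finset.sum_congr rfl h2, Finset.sum_const, smul_eq_mul]
  have hne : (univ : Finset F).Nonempty := Finset.univ_nonempty
  obtain ⟨M, _, hM⟩ := Finset.exists_le_of_sum_le hne
    (f := fun M : F => (((Tset n m).filter fun p => Dv M p.1.1 p.1.2 p.2.1 p.2.2 = 0).card) * k)
    (g := fun _ : F => n.choose 2 * m.choose 2)
    (by rw [hsum, Finset.sum_const, Finset.card_univ, smul_eq_mul, card_Tset, mul_comm])
  exact ⟨M, hM⟩

lemma quad_filter_left (a1 a2 : Fin n) (b1 b2 : Fin m) :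
    (({inl a1, inl a2, inr b1, inr b2} : Finset (Fin n ⊕ Fin m)).filter fun v => v.isLeft)
      = {inl a1, inl a2} := by
  ext v; cases v <;> simp

lemma quad_filter_right (a1 a2 : Fin n) (b1 b2 : Fin m) :
    (({inl a1, inl a2, inr b1, inr b2} : Finset (Fin n ⊕ Fin m)).filter fun v => v.isRight)
      = {inr b1, inr b2} := by
  ext v; cases v <;> simp

lemma quad_card (a1 a2 : Fin n) (b1 b2 : Fin m) (ha : a1 ≠ a2) (hb : b1 ≠ b2) :
    ({inl a1, inl a2, inr b1, inr b2} : Finset (Fin n ⊕ Fin m)).card = 4 := by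
  rw [Finset.card_insert_of_notMem (by simp [ha]),
    Finset.card_insert_of_notMem (by simp),
    Finset.card_pair (by simp [hb])]

/-- If `S` contains a fair quadruple, then some member of `famQ` is inside `S`. -/
lemma cover_aux (M : Fin n → Fin m → ZMod k) (S : Finset (Fin n ⊕ Fin m))
    (a1 a2 : Fin n) (b1 b2 : Fin m) (ha : a1 ≠ a2) (hb : b1 ≠ b2)
    (hD : Dv M a1 a2 b1 b2 = 0)
    (hA1 : inl a1 ∈ S) (hA2 : inl a2 ∈ S) (hB1 : inr b1 ∈ S) (hB2 : inr b2 ∈ S) :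
    ∃ Q ∈ famQ k M, Q ⊆ S := by
  simp only [Dv] at hD
  have key : ∀ (c1 c2 : Fin n) (d1 d2 : Fin m), c1 < c2 → d1 < d2 →
      Dv M c1 c2 d1 d2 = 0 →
      inl c1 ∈ S → inl c2 ∈ S → inr d1 ∈ S → inr d2 ∈ S → ∃ Q ∈ famQ k M, Q ⊆ S := by
    intro c1 c2 d1 d2 hc hd hD' h1 h2 h3 h4
    refine ⟨quad ((c1, c2), (d1, d2)), ?_, ?_⟩
    · rw [famQ, Finset.mem_image]
      refine ⟨((c1, c2), (d1, d2)), ?_, rfl⟩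
      rw [Finset.mem_filter, Tset, Finset.mem_product]
      exact ⟨⟨by simpa [pairsLT] using hc, by simpa [pairsLT] using hd⟩, hD'⟩
    · rw [quad]
      simp only [Finset.insert_subset_iff, Finset.singleton_subset_iff]
      exact ⟨h1, h2, h3, h4⟩
  rcases ha.lt_or_gt with h | h <;> rcases hb.lt_or_gt with h' | h'
  · exact key a1 a2 b1 b2 h h' (by rw [Dv]; linear_combination hD) hA1 hA2 hB1 hB2
  · exact key a1 a2 b2 b1 h h' (by rw [Dv]; linear_combination -hD) hA1 hA2 hB2 hB1
  · exact key a2 a1 b1 b2 h h' (by rw [Dv]; linear_combination -hD) hA2 hA1 hB1 hB2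
  · exact key a2 a1 b2 b1 h h' (by rw [Dv]; linear_combination hD) hA2 hA1 hB2 hB1

end QK2Aux

open QK2Aux Finset Sum
theorem upper_bound_Q_k2 (k n m : ℕ) (hk : 1 ≤ k) :
    ∃ 𝒬 : Finset (Finset (Fin n ⊕ Fin m)),
      (∀ Q ∈ 𝒬, Q.card = 4 ∧ (Q.filter (fun v => v.isLeft)).card = 2 ∧
        (Q.filter (fun v => v.isRight)).card = 2) ∧
      (∀ S : Finset (Fin n ⊕ Fin m),
        ((S.filter (fun v => v.isLeft)).card = 2 ∧
            (S.filter (fun v => v.isRight)).card = k + 1) ∨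
        ((S.filter (fun v => v.isLeft)).card = k + 1 ∧
            (S.filter (fun v => v.isRight)).card = 2) →
        ∃ Q ∈ 𝒬, Q ⊆ S) ∧
      𝒬.card * k ≤ n.choose 2 * m.choose 2 := by
  haveI : NeZero k := ⟨by omega⟩
  obtain ⟨M, hM⟩ := exists_good_matrix (k := k) (n := n) (m := m)
  refine ⟨famQ k M, ?_, ?_, ?_⟩
  · -- structure of the quadruples
    intro Q hQ
    rw [famQ, Finset.mem_image] at hQ
    obtain ⟨p, hp, rfl⟩ := hQ
    rw [Finset.mem_filter, Tset, Finset.mem_product] at hp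
    have ha : p.1.1 ≠ p.1.2 := ne_of_lt (by simpa [pairsLT] using hp.1.1)
    have hb : p.2.1 ≠ p.2.2 := ne_of_lt (by simpa [pairsLT] using hp.1.2)
    refine ⟨quad_card _ _ _ _ ha hb, ?_, ?_⟩
    · rw [quad, quad_filter_left, Finset.card_pair (by simp [ha])]
    · rw [quad, quad_filter_right, Finset.card_pair (by simp [hb])]
  · -- covering property
    intro S hS
    rcases hS with ⟨hL, hR⟩ | ⟨hL, hR⟩
    · -- 2 from A, k+1 from B
      obtain ⟨x, y, hxy, hset⟩ := Finset.card_eq_two.mp hL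
      have hx : x ∈ S.filter fun v => v.isLeft := by rw [hset]; simp
      have hy : y ∈ S.filter fun v => v.isLeft := by rw [hset]; simp
      rw [Finset.mem_filter] at hx hy
      obtain ⟨a1, rfl⟩ : ∃ a, x = inl a := by
        cases x with
        | inl a => exact ⟨a, rfl⟩
        | inr b => simp at hx
      obtain ⟨a2, rfl⟩ : ∃ a, y = inl a := by
        cases y with
        | inl a => exact ⟨a, rfl⟩
        | inr b => simp at hy
      have ha : a1 ≠ a2 := fun h => hxy (by rw [h])
      have hcard : Fintype.card (ZMod k) < (S.filter fun v => v.isRight).card := by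
        rw [ZMod.card, hR]; omega
      obtain ⟨u, hu, v, hv, huv, hfeq⟩ :=
        Finset.exists_ne_map_eq_of_card_lt_of_maps_to (t := (univ : Finset (ZMod k))) hcard
          (f := Sum.elim (fun _ => (0 : ZMod k)) fun b => M a1 b - M a2 b)
          (fun _ _ => Finset.mem_univ _)
      rw [Finset.mem_filter] at hu hv
      obtain ⟨b1, rfl⟩ : ∃ b, u = inr b := by
        cases u with
        | inl a => simp at hu
        | inr b => exact ⟨b, rfl⟩
      obtain ⟨b2, rfl⟩ : ∃ b, v = inr b := by
        cases v with
        | inl a => simp at hv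
        | inr b => exact ⟨b, rfl⟩
      have hb : b1 ≠ b2 := fun h => huv (by rw [h])
      simp only [Sum.elim_inr] at hfeq
      exact cover_aux M S a1 a2 b1 b2 ha hb (by rw [Dv]; linear_combination hfeq)
        hx.1 hy.1 hu.1 hv.1
    · -- k+1 from A, 2 from B
      obtain ⟨x, y, hxy, hset⟩ := Finset.card_eq_two.mp hR
      have hx : x ∈ S.filter fun v => v.isRight := by rw [hset]; simp
      have hy : y ∈ S.filter fun v => v.isRight := by rw [hset]; simp
      rw [Finset.mem_filter] at hx hy
      obtain ⟨b1, rfl⟩ : ∃ b, x = inr b := by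
        cases x with
        | inl a => simp at hx
        | inr b => exact ⟨b, rfl⟩
      obtain ⟨b2, rfl⟩ : ∃ b, y = inr b := by
        cases y with
        | inl a => simp at hy
        | inr b => exact ⟨b, rfl⟩
      have hb : b1 ≠ b2 := fun h => hxy (by rw [h])
      have hcard : Fintype.card (ZMod k) < (S.filter fun v => v.isLeft).card := by
        rw [ZMod.card, hL]; omega
      obtain ⟨u, hu, v, hv, huv, hfeq⟩ :=
        Finset.exists_ne_map_eq_of_card_lt_of_maps_to (t := (univ : Finset (ZMod k))) hcard
          (f := Sum.elim (fun a => M a b1 - M a b2) fun _ => (0 : ZMod k))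
          (fun _ _ => Finset.mem_univ _)
      rw [Finset.mem_filter] at hu hv
      obtain ⟨a1, rfl⟩ : ∃ a, u = inl a := by
        cases u with
        | inl a => exact ⟨a, rfl⟩
        | inr b => simp at hu
      obtain ⟨a2, rfl⟩ : ∃ a, v = inl a := by
        cases v with
        | inl a => exact ⟨a, rfl⟩
        | inr b => simp at hv
      have ha : a1 ≠ a2 := fun h => huv (by rw [h])
      simp only [Sum.elim_inl] at hfeq
      exact cover_aux M S a1 a2 b1 b2 ha hb (by rw [Dv]; linear_combination hfeq)
        hu.1 hv.1 hx.1 hy.1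
  · -- cardinality bound
    calc (famQ k M).card * k
        ≤ (((Tset n m).filter fun p => Dv M p.1.1 p.1.2 p.2.1 p.2.2 = 0).card) * k :=
          Nat.mul_le_mul_right k (Finset.card_image_le)
      _ ≤ n.choose 2 * m.choose 2 := hM
end

section
/- Consider disjoint sets A, B with |A| = n, |B| = m, a 0,1-matrix X of size n×m, and the 4-graph H on A ∪ B whose edges are: all quadruples within A, all quadruples within B, and all quadruples {a_i, a_j, b_p, b_q} with x_{ip} + x_{iq} + x_{jp} + x_{jq} even. Then every 5-subset of A ∪ B contains at least one edge of H. -/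
lemma zmod2_pigeon (a b c : ZMod 2) : a = b ∨ a = c ∨ b = c := by
  revert a b c; decide

lemma zmod2_add_self (a : ZMod 2) : a + a = 0 := by
  fin_cases a <;> decide

theorem giraud_construction (n m : ℕ) (X : Fin n → Fin m → ZMod 2)
    (S : Finset (Fin n ⊕ Fin m)) (hS : S.card = 5) :
    ∃ e ⊆ S, e.card = 4 ∧
      ((∀ v ∈ e, v.isLeft = true) ∨ (∀ v ∈ e, v.isRight = true) ∨
        (∃ i j : Fin n, ∃ p q : Fin m, i ≠ j ∧ p ≠ q ∧
          e = {Sum.inl i, Sum.inl j, Sum.inr p, Sum.inr q} ∧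
          X i p + X i q + X j p + X j q = 0)) := by
  have hsum : S.toLeft.card + S.toRight.card = 5 := by
    rw [Finset.card_toLeft_add_card_toRight, hS]
  rcases le_or_gt 4 S.toLeft.card with hL | hL
  · obtain ⟨t, ht, htc⟩ := Finset.exists_subset_card_eq hL
    refine ⟨t.map ⟨Sum.inl, Sum.inl_injective⟩, ?_, by simp [htc], Or.inl ?_⟩
    · intro v hv
      simp only [Finset.mem_map, Function.Embedding.coeFn_mk] at hv
      obtain ⟨a, ha, rfl⟩ := hv
      exact Finset.mem_toLeft.mp (ht ha)
    · intro v hv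
      simp only [Finset.mem_map, Function.Embedding.coeFn_mk] at hv
      obtain ⟨a, _, rfl⟩ := hv
      rfl
  rcases le_or_gt 4 S.toRight.card with hR | hR
  · obtain ⟨t, ht, htc⟩ := Finset.exists_subset_card_eq hR
    refine ⟨t.map ⟨Sum.inr, Sum.inr_injective⟩, ?_, by simp [htc], Or.inr (Or.inl ?_)⟩
    · intro v hv
      simp only [Finset.mem_map, Function.Embedding.coeFn_mk] at hv
      obtain ⟨a, ha, rfl⟩ := hv
      exact Finset.mem_toRight.mp (ht ha)
    · intro v hv
      simp only [Finset.mem_map, Function.Embedding.coeFn_mk] at hv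
      obtain ⟨a, _, rfl⟩ := hv
      rfl
  -- Now toLeft.card ≤ 3 and toRight.card ≤ 3, sum 5: either (3,2) or (2,3)
  have hcases : (S.toLeft.card = 3 ∧ S.toRight.card = 2) ∨
      (S.toLeft.card = 2 ∧ S.toRight.card = 3) := by omega
  -- helper to build edge
  have build : ∀ i j : Fin n, ∀ p q : Fin m, i ≠ j → p ≠ q →
      Sum.inl i ∈ S → Sum.inl j ∈ S → Sum.inr p ∈ S → Sum.inr q ∈ S →
      X i p + X i q + X j p + X j q = 0 →
      ∃ e ⊆ S, e.card = 4 ∧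
      ((∀ v ∈ e, v.isLeft = true) ∨ (∀ v ∈ e, v.isRight = true) ∨
        (∃ i j : Fin n, ∃ p q : Fin m, i ≠ j ∧ p ≠ q ∧
          e = {Sum.inl i, Sum.inl j, Sum.inr p, Sum.inr q} ∧
          X i p + X i q + X j p + X j q = 0)) := by
    intro i j p q hij hpq hi hj hp hq hsum0
    refine ⟨{Sum.inl i, Sum.inl j, Sum.inr p, Sum.inr q}, ?_, ?_,
      Or.inr (Or.inr ⟨i, j, p, q, hij, hpq, rfl, hsum0⟩)⟩
    · intro v hv
      simp only [Finset.mem_insert, Finset.mem_singleton] at hv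
      rcases hv with rfl | rfl | rfl | rfl <;> assumption
    · rw [Finset.card_insert_of_notMem (by simp [hij]),
        Finset.card_insert_of_notMem (by simp),
        Finset.card_insert_of_notMem (by simp [hpq]), Finset.card_singleton]
  rcases hcases with ⟨h3, h2⟩ | ⟨h2, h3⟩
  · obtain ⟨i1, i2, i3, h12, h13, h23, hLeq⟩ := Finset.card_eq_three.mp h3
    obtain ⟨p, q, hpq, hReq⟩ := Finset.card_eq_two.mp h2
    have hi : ∀ a ∈ ({i1, i2, i3} : Finset (Fin n)), Sum.inl a ∈ S := by
      intro a ha; rw [← hLeq] at ha; exact Finset.mem_toLeft.mp ha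
    have hp : Sum.inr p ∈ S := Finset.mem_toRight.mp (hReq ▸ (by simp))
    have hq : Sum.inr q ∈ S := Finset.mem_toRight.mp (hReq ▸ (by simp))
    have key : ∀ a b : Fin n, X a p + X a q = X b p + X b q →
        X a p + X a q + X b p + X b q = 0 := by
      intro a b h
      calc X a p + X a q + X b p + X b q = (X a p + X a q) + (X b p + X b q) := by ring
        _ = (X b p + X b q) + (X b p + X b q) := by rw [h]
        _ = 0 := zmod2_add_self _
    rcases zmod2_pigeon (X i1 p + X i1 q) (X i2 p + X i2 q) (X i3 p + X i3 q)
      with h | h | h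
    · exact build i1 i2 p q h12 hpq (hi _ (by simp)) (hi _ (by simp)) hp hq (key _ _ h)
    · exact build i1 i3 p q h13 hpq (hi _ (by simp)) (hi _ (by simp)) hp hq (key _ _ h)
    · exact build i2 i3 p q h23 hpq (hi _ (by simp)) (hi _ (by simp)) hp hq (key _ _ h)
  · obtain ⟨p1, p2, p3, h12, h13, h23, hReq⟩ := Finset.card_eq_three.mp h3
    obtain ⟨i, j, hij, hLeq⟩ := Finset.card_eq_two.mp h2
    have hpmem : ∀ a ∈ ({p1, p2, p3} : Finset (Fin m)), Sum.inr a ∈ S := by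
      intro a ha; rw [← hReq] at ha; exact Finset.mem_toRight.mp ha
    have hi : Sum.inl i ∈ S := Finset.mem_toLeft.mp (hLeq ▸ (by simp))
    have hj : Sum.inl j ∈ S := Finset.mem_toLeft.mp (hLeq ▸ (by simp))
    have key : ∀ a b : Fin m, X i a + X j a = X i b + X j b →
        X i a + X i b + X j a + X j b = 0 := by
      intro a b h
      calc X i a + X i b + X j a + X j b = (X i a + X j a) + (X i b + X j b) := by ring
        _ = (X i b + X j b) + (X i b + X j b) := by rw [h]
        _ = 0 := zmod2_add_self _
    rcases zmod2_pigeon (X i p1 + X j p1) (X i p2 + X j p2) (X i p3 + X j p3)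
      with h | h | h
    · exact build i j p1 p2 hij h12 hi hj (hpmem _ (by simp)) (hpmem _ (by simp)) (key _ _ h)
    · exact build i j p1 p3 hij h13 hi hj (hpmem _ (by simp)) (hpmem _ (by simp)) (key _ _ h)
    · exact build i j p2 p3 hij h23 hi hj (hpmem _ (by simp)) (hpmem _ (by simp)) (key _ _ h)
end
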